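/- Let k be a field of characteristic zero and let a ∈ k with a ≠ 0. The ideal of k[X,Y] generated by X·(X·Y−1) − a is a prime ideal, while the ideal generated by X·(X·Y−1) is not prime. (Thus the fibers of Broughton's map over nonzero values are integral, while the fiber over 0 is reducible.) -/

import Mathlib

set_option maxRecDepth 4000

open MvPolynomial

/-- The fibers of Broughton's map `f = X(XY−1)` over nonzero values are integral while the
fiber over `0` is reducible: for `a ≠ 0` the ideal `(f − a)` of `k[X,Y]` is prime, whereas
the ideal `(f)` is not prime. -/
theorem stmt_5 (k : Type) [Field k] [CharZero k] (a : k) (ha : a ≠ 0) :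
    (Ideal.span {(X 0 * (X 0 * X 1 - 1) - C a : MvPolynomial (Fin 2) k)}).IsPrime ∧
    ¬ (Ideal.span {(X 0 * (X 0 * X 1 - 1) : MvPolynomial (Fin 2) k)}).IsPrime := by
  constructor
  · -- Primality of `(f - a)`: transfer to `k[T][X]` where `f - a` becomes the
    -- degree-one primitive polynomial `T² · X - (T + a)`, and apply Gauss's lemma.
    set R := MvPolynomial (Fin 1) k
    set T : R := X 0 with hT
    set g : Polynomial R :=
      Polynomial.C (T ^ 2) * Polynomial.X + Polynomial.C (-(T + MvPolynomial.C a)) with hg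
    have hc1 : g.coeff 1 = T ^ 2 := by simp [hg, -map_pow]
    have hc0 : g.coeff 0 = -(T + MvPolynomial.C a) := by simp [hg, -map_pow]
    have hprim : g.IsPrimitive := by
      intro r hr
      rw [Polynomial.C_dvd_iff_dvd_coeff] at hr
      have h1 : r ∣ T ^ 2 := hc1 ▸ hr 1
      have h0 : r ∣ T + MvPolynomial.C a := dvd_neg.mp (hc0 ▸ hr 0)
      have h2 : r ∣ MvPolynomial.C a * MvPolynomial.C a := by
        have key : MvPolynomial.C a * MvPolynomial.C a
            = T ^ 2 - (T + MvPolynomial.C a) * (T - MvPolynomial.C a) := by ring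
        rw [key]
        exact dvd_sub h1 (h0.mul_right _)
      exact isUnit_of_dvd_unit h2
        ((ha.isUnit.map MvPolynomial.C).mul (ha.isUnit.map MvPolynomial.C))
    -- irreducible over the fraction field since it has degree 1 there
    set K := FractionRing R
    have hinj : Function.Injective (algebraMap R K) := IsFractionRing.injective R K
    have hlead : algebraMap R K (T ^ 2) ≠ 0 := fun h =>
      pow_ne_zero 2 (X_ne_zero 0) (hinj (by simpa using h))
    have hdeg : (g.map (algebraMap R K)).degree = 1 := by
      rw [hg, Polynomial.map_add, Polynomial.map_mul, Polynomial.map_C, Polynomial.map_C,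
        Polynomial.map_X]
      exact Polynomial.degree_linear hlead
    have hirrmap : Irreducible (g.map (algebraMap R K)) :=
      Polynomial.irreducible_of_degree_eq_one hdeg
    have hgirr : Irreducible g := hprim.irreducible_of_irreducible_map_of_injective hinj hirrmap
    -- transfer back via the algebra equivalence swapping variables
    let e := (renameEquiv k (Equiv.swap (0 : Fin 2) 1)).trans (finSuccEquiv k 1)
    have hmap : e (X 0 * (X 0 * X 1 - 1) - C a) = g := by
      have h1 : (1 : Fin 2) = Fin.succ 0 := rfl
      show (finSuccEquiv k 1)
        ((renameEquiv k (Equiv.swap (0 : Fin 2) 1)) (X 0 * (X 0 * X 1 - 1) - C a)) = g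
      rw [hg]
      have hCa : (finSuccEquiv k 1) (C a) = Polynomial.C (MvPolynomial.C a) := by
        simp [finSuccEquiv_apply]
      simp only [h1, renameEquiv_apply, map_sub, map_mul, map_one, rename_X, rename_C,
        Equiv.swap_apply_left, Equiv.swap_apply_right, finSuccEquiv_X_zero, finSuccEquiv_X_succ,
        hCa, Polynomial.C_pow, Polynomial.C_sub, Polynomial.C_neg, Polynomial.C_add]
      rw [hT, Polynomial.C_neg, Polynomial.C_add]
      ring
    have hirr : Irreducible (X 0 * (X 0 * X 1 - 1) - C a : MvPolynomial (Fin 2) k) := by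
      rw [← MulEquiv.irreducible_iff e.toMulEquiv]
      show Irreducible (e (X 0 * (X 0 * X 1 - 1) - C a))
      rwa [hmap]
    have hp : Prime (X 0 * (X 0 * X 1 - 1) - C a : MvPolynomial (Fin 2) k) :=
      UniqueFactorizationMonoid.irreducible_iff_prime.mp hirr
    exact (Ideal.span_singleton_prime hp.ne_zero).mpr hp
  · -- Non-primality of `(f)`: `X · (XY - 1) ∈ (f)` but neither factor is divisible by `f`.
    intro h
    have hmem : (X 0 * (X 0 * X 1 - 1) : MvPolynomial (Fin 2) k) ∈
        Ideal.span {(X 0 * (X 0 * X 1 - 1) : MvPolynomial (Fin 2) k)} :=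
      Ideal.subset_span rfl
    rcases h.mem_or_mem hmem with h1 | h1 <;> rw [Ideal.mem_span_singleton] at h1
    · -- evaluate at (1,1): f ↦ 0 but X ↦ 1
      have := map_dvd (eval (fun _ => (1 : k))) h1
      simp at this
    · -- evaluate at (0,0): f ↦ 0 but XY - 1 ↦ -1
      have := map_dvd (eval (fun _ => (0 : k))) h1
      simp at this
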